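/- Under the standing assumptions on φ and φ_λ, let 𝒟 := {x ∈ H : ∃ z ∈ ℝ^m with S(x,z) < h(x)}. Then φ is continuous at every point of 𝒟, and for every fixed λ > 0 the function φ_λ is continuous at every point of 𝒟 (with respect to the norm topology of H). (Theorem 3.1(e).) -/

import Mathlib

open Filter Topology MeasureTheory

section Helpers

lemma real_le_of_forall_pos_le_add {a b : ℝ} (h : ∀ ε : ℝ, 0 < ε → a ≤ b + ε) : a ≤ b := by
  by_contra hab
  push_neg at hab
  have := h ((a - b)/2) (by linarith)
  linarith

lemma sq_combo {a b n1 n2 : ℝ} (ha : 0 ≤ a) (hb : 0 ≤ b) (hab : a + b = 1)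
    (h1 : 0 ≤ n1) (h2 : 0 ≤ n2) : (a*n1 + b*n2)^2 ≤ a*n1^2 + b*n2^2 := by
  nlinarith [sq_nonneg (n1 - n2), mul_nonneg ha hb]

lemma quad_low {lam G r aa : ℝ} (hlam : 0 < lam) :
    -(G*aa + G^2*lam/2) ≤ (r - aa)^2/(2*lam) - G*r := by
  have hkey : (r - aa)^2/(2*lam) - G*r + (G*aa + G^2*lam/2)
      = (r - aa - lam*G)^2/(2*lam) := by
    field_simp
    ring
  have h2 : 0 ≤ (r - aa - lam*G)^2/(2*lam) := by positivity
  linarith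

/-- Uniform bound on a weak*-compact set of functionals. -/
lemma dual_bound {Y : Type*} [NormedAddCommGroup Y] [NormedSpace ℝ Y] [CompleteSpace Y]
    (C : Set (WeakDual ℝ Y)) (hCcpt : IsCompact C) :
    ∃ B : ℝ, 0 ≤ B ∧ ∀ v ∈ C, ∀ y : Y, |v y| ≤ B * ‖y‖ := by
  have hpt : ∀ y : Y, ∃ r, ∀ v : C,
      ‖(WeakDual.toStrongDual ((v : WeakDual ℝ Y)) : Y →L[ℝ] ℝ) y‖ ≤ r := by
    intro y
    have hcpt : IsCompact ((fun v : WeakDual ℝ Y => v y) '' C) :=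
      hCcpt.image (WeakDual.eval_continuous y)
    obtain ⟨r, hr⟩ := isBounded_iff_forall_norm_le.1 hcpt.isBounded
    exact ⟨r, fun i => hr _ ⟨i.1, i.2, rfl⟩⟩
  obtain ⟨B', hB'⟩ := banach_steinhaus
      (g := fun v : C => (WeakDual.toStrongDual ((v : WeakDual ℝ Y)) : Y →L[ℝ] ℝ)) hpt
  refine ⟨max B' 0, le_max_right _ _, fun v hv y => ?_⟩
  have h1 : |v y| = ‖(WeakDual.toStrongDual v : Y →L[ℝ] ℝ) y‖ := rfl
  rw [h1]
  calc ‖(WeakDual.toStrongDual v : Y →L[ℝ] ℝ) y‖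
      ≤ ‖(WeakDual.toStrongDual v : Y →L[ℝ] ℝ)‖ * ‖y‖ :=
        ContinuousLinearMap.le_opNorm _ y
    _ ≤ max B' 0 * ‖y‖ :=
        mul_le_mul_of_nonneg_right (le_trans (hB' ⟨v, hv⟩) (le_max_left _ _)) (norm_nonneg _)

lemma key_aux {H : Type*} [NormedAddCommGroup H] [InnerProductSpace ℝ H] {m : ℕ}
    {Ω : Type*} [MeasurableSpace Ω] (P : Measure Ω) [IsProbabilityMeasure P]
    (ξ : Ω → EuclideanSpace ℝ (Fin m)) (hξ : Measurable ξ) (hlaw : P.map ξ ≪ volume)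
    (g : H × EuclideanSpace ℝ (Fin m) → ℝ) (hgcont : Continuous g)
    (hgconv : ConvexOn ℝ Set.univ g)
    (h : H → ℝ) (hh : Continuous h) (x₀ : H)
    (zb : EuclideanSpace ℝ (Fin m)) (hzb : g (x₀, zb) < h x₀) :
    ContinuousAt (fun x => (P {ω | g (x, ξ ω) ≤ h x}).toReal) x₀ := by
  -- convexity in z
  have hgz : ConvexOn ℝ Set.univ (fun z : EuclideanSpace ℝ (Fin m) => g (x₀, z)) := by
    refine ⟨convex_univ, fun z1 _ z2 _ a b ha hb hab => ?_⟩
    have h2 := hgconv.2 (Set.mem_univ ((x₀ : H), z1)) (Set.mem_univ (x₀, z2)) ha hb hab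
    have heq : a • ((x₀ : H), z1) + b • ((x₀ : H), z2) = ((x₀ : H), a • z1 + b • z2) := by
      rw [Prod.smul_mk, Prod.smul_mk, Prod.mk_add_mk, Convex.combo_self hab]
    rw [heq] at h2
    simpa using h2
  set B : Set (EuclideanSpace ℝ (Fin m)) := {z | g (x₀, z) ≤ h x₀} with hB
  have hBconv : Convex ℝ B := by
    have := hgz.convex_le (h x₀)
    simpa using this
  -- equality set inside frontier
  have hfront : {z : EuclideanSpace ℝ (Fin m) | g (x₀, z) = h x₀} ⊆ frontier B := by
    intro z hz
    have hzB : z ∈ B := le_of_eq hz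
    rw [frontier_eq_closure_inter_closure]
    constructor
    · exact subset_closure hzB
    · rw [closure_compl]
      intro hzint
      obtain ⟨ε, hε, hball⟩ := Metric.isOpen_iff.1 isOpen_interior z hzint
      have hzne : z ≠ zb := by
        intro hzz; rw [hzz] at hz; exact absurd hz (ne_of_lt hzb)
      have hnorm : 0 < ‖z - zb‖ := by
        rw [norm_sub_pos_iff]; exact hzne
      set t : ℝ := min 1 (ε / (2 * ‖z - zb‖)) with ht
      have ht0 : 0 < t := lt_min one_pos (by positivity)
      have ht1 : t ≤ 1 := min_le_left _ _
      set z' : EuclideanSpace ℝ (Fin m) := z + t • (z - zb) with hz'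
      have hz'B : z' ∈ B := by
        apply interior_subset
        apply hball
        rw [Metric.mem_ball, dist_eq_norm]
        have heq2 : z' - z = t • (z - zb) := by rw [hz']; abel
        rw [heq2, norm_smul, Real.norm_eq_abs, abs_of_pos ht0]
        calc t * ‖z - zb‖ ≤ (ε / (2 * ‖z - zb‖)) * ‖z - zb‖ := by
              apply mul_le_mul_of_nonneg_right (min_le_right _ _) (norm_nonneg _)
          _ = ε / 2 := by field_simp
          _ < ε := by linarith
      have hcomb : ((1 : ℝ)/(1+t)) • z' + (t/(1+t)) • zb = z := by
        have h1t : (1 : ℝ) + t ≠ 0 := by positivity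
        rw [hz', smul_add, smul_smul, smul_sub]
        match_scalars <;> field_simp <;> ring
      have hconv2 := hgz.2 (Set.mem_univ z') (Set.mem_univ zb)
        (le_of_lt (by positivity : (0:ℝ) < 1/(1+t)))
        (le_of_lt (by positivity : (0:ℝ) < t/(1+t)))
        (by field_simp)
      rw [hcomb] at hconv2
      simp only [smul_eq_mul] at hconv2
      have hlt : g (x₀, z) < h x₀ := by
        calc g (x₀, z) ≤ (1/(1+t)) * g (x₀, z') + (t/(1+t)) * g (x₀, zb) := hconv2
          _ < (1/(1+t)) * h x₀ + (t/(1+t)) * h x₀ := by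
              apply add_lt_add_of_le_of_lt
              · exact mul_le_mul_of_nonneg_left hz'B (by positivity)
              · exact mul_lt_mul_of_pos_left hzb (by positivity)
          _ = h x₀ := by field_simp
      exact absurd hz (ne_of_lt hlt)
  -- a.e. non-equality
  have hfrmeas : MeasurableSet (frontier B) := isClosed_frontier.measurableSet
  have hvol : volume (frontier B) = 0 := hBconv.addHaar_frontier volume
  have hmap : P.map ξ (frontier B) = 0 := hlaw hvol
  have hpre : P (ξ ⁻¹' frontier B) = 0 := by
    rwa [Measure.map_apply hξ hfrmeas] at hmap
  have hae : ∀ᵐ ω ∂P, g (x₀, ξ ω) ≠ h x₀ := by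
    rw [ae_iff]
    apply measure_mono_null _ hpre
    intro ω hω
    simp only [Set.mem_setOf_eq, not_not] at hω
    exact hfront hω
  -- measurability of the sets
  set A : H → Set Ω := fun x => {ω | g (x, ξ ω) ≤ h x} with hA
  have hAmeas : ∀ x, MeasurableSet (A x) := by
    intro x
    have hc1 : Continuous fun z : EuclideanSpace ℝ (Fin m) => g (x, z) := by fun_prop
    have hcl : IsClosed {z : EuclideanSpace ℝ (Fin m) | g (x, z) ≤ h x} :=
      isClosed_le hc1 continuous_const
    exact hξ hcl.measurableSet
  set F : H → Ω → ℝ := fun x ω => (A x).indicator 1 ω with hF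
  have hint : ∀ x, (P (A x)).toReal = ∫ ω, F x ω ∂P := fun x =>
    (integral_indicator_one (hAmeas x)).symm
  have hlim : ∀ᵐ ω ∂P, Tendsto (fun x => F x ω) (𝓝 x₀) (𝓝 (F x₀ ω)) := by
    filter_upwards [hae] with ω hω
    rcases lt_or_gt_of_ne hω with hlt | hgt
    · have hc2 : Continuous fun x : H => g (x, ξ ω) := by fun_prop
      have hopen : IsOpen {x : H | g (x, ξ ω) < h x} := isOpen_lt hc2 hh
      have hev : ∀ᶠ x in 𝓝 x₀, g (x, ξ ω) < h x := hopen.eventually_mem hlt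
      have h1 : F x₀ ω = 1 := Set.indicator_of_mem (le_of_lt hlt) 1
      rw [h1]
      apply tendsto_const_nhds.congr'
      filter_upwards [hev] with x hx
      exact (Set.indicator_of_mem (le_of_lt hx) 1).symm
    · have hc2 : Continuous fun x : H => g (x, ξ ω) := by fun_prop
      have hopen : IsOpen {x : H | h x < g (x, ξ ω)} := isOpen_lt hh hc2
      have hev : ∀ᶠ x in 𝓝 x₀, h x < g (x, ξ ω) := hopen.eventually_mem hgt
      have h0 : F x₀ ω = 0 := Set.indicator_of_notMem (not_le.2 hgt) 1
      rw [h0]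
      apply tendsto_const_nhds.congr'
      filter_upwards [hev] with x hx
      exact (Set.indicator_of_notMem (not_le.2 hx) 1).symm
  have hdom : Tendsto (fun x => ∫ ω, F x ω ∂P) (𝓝 x₀) (𝓝 (∫ ω, F x₀ ω ∂P)) := by
    apply tendsto_integral_filter_of_dominated_convergence (fun _ => (1 : ℝ))
    · exact Eventually.of_forall fun x =>
        ((measurable_one.indicator (hAmeas x)).aestronglyMeasurable)
    · exact Eventually.of_forall fun x => Eventually.of_forall fun ω => by
        simp only [hF]
        by_cases hxω : ω ∈ A x
        · simp [Set.indicator_of_mem hxω]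
        · simp [Set.indicator_of_notMem hxω]
    · exact integrable_const 1
    · exact hlim
  have heqfun : (fun x => (P (A x)).toReal) = fun x => ∫ ω, F x ω ∂P := funext hint
  show Tendsto (fun x => (P (A x)).toReal) (𝓝 x₀) (𝓝 ((P (A x₀)).toReal))
  rw [heqfun, hint x₀]
  exact hdom


end Helpers
/-- The Moreau envelope of a function `S : H × E → ℝ` (in two arguments) with parameter
`lam`, for the Hilbert norm of the product. -/
noncomputable def moreauEnv2 {H E : Type*} [NormedAddCommGroup H] [InnerProductSpace ℝ H]
    [NormedAddCommGroup E] [InnerProductSpace ℝ E]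
    (S : H → E → ℝ) (lam : ℝ) (x : H) (z : E) : ℝ :=
  ⨅ u : H × E, (S u.1 u.2 + (‖x - u.1‖ ^ 2 + ‖z - u.2‖ ^ 2) / (2 * lam))

/-- Weak (sequential) convergence in a Hilbert space: `⟪x_k, y⟫ → ⟪x₀, y⟫` for every `y`. -/
def WeakSeqTendsto {H : Type*} [NormedAddCommGroup H] [InnerProductSpace ℝ H]
    (x : ℕ → H) (x₀ : H) : Prop :=
  ∀ y : H, Tendsto (fun k => (inner ℝ (x k) y : ℝ)) atTop (𝓝 (inner ℝ x₀ y))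

set_option maxHeartbeats 1600000 in
/-- Theorem 3.1(e): `φ` and each `φ_λ` (`λ > 0`) are (norm-)continuous at every point of
the open set `𝒟 = {x | ∃ z, S(x,z) < h(x)}`. -/
theorem stmt9
    {H Y : Type*} [NormedAddCommGroup H] [InnerProductSpace ℝ H] [CompleteSpace H]
    [SecondCountableTopology H]
    [NormedAddCommGroup Y] [NormedSpace ℝ Y] [CompleteSpace Y] {m : ℕ}
    {Ω : Type*} [MeasurableSpace Ω] (P : Measure Ω) [IsProbabilityMeasure P]
    (ξ : Ω → EuclideanSpace ℝ (Fin m)) (hξ : Measurable ξ)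
    (hlaw : P.map ξ ≪ volume)
    (K : Set Y) (hKne : K.Nonempty) (hKcl : IsClosed K) (hKconv : Convex ℝ K)
    (hKcone : ∀ c : ℝ, 0 ≤ c → ∀ y ∈ K, c • y ∈ K)
    (C : Set (WeakDual ℝ Y)) (hCne : C.Nonempty) (hCconv : Convex ℝ C) (hCcpt : IsCompact C)
    (hCgen : closure {w : WeakDual ℝ Y | ∃ c : ℝ, 0 ≤ c ∧ ∃ v ∈ C, w = c • v}
      = {w : WeakDual ℝ Y | ∀ y ∈ K, 0 ≤ w y})
    (Φ : H → EuclideanSpace ℝ (Fin m) → Y)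
    (hΦ : Continuous fun q : H × EuclideanSpace ℝ (Fin m) => Φ q.1 q.2)
    (h : H → ℝ) (hconv : ConvexOn ℝ Set.univ h) (hC1 : ContDiff ℝ 1 h)
    (hscal : ∀ v ∈ C, ConvexOn ℝ Set.univ
      (fun q : H × EuclideanSpace ℝ (Fin m) => v (Φ q.1 q.2) + h q.1))
    (S : H → EuclideanSpace ℝ (Fin m) → ℝ)
    (hS : ∀ x z, S x z = ⨆ v : C, ((v : WeakDual ℝ Y) (Φ x z) + h x))
    (φ : H → ℝ)
    (hφ : ∀ x, φ x = (P {ω | S x (ξ ω) ≤ h x}).toReal)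
    (φl : ℝ → H → ℝ)
    (hφl : ∀ lam x, φl lam x = (P {ω | moreauEnv2 S lam x (ξ ω) ≤ h x}).toReal)
    :
    ∀ x₀ : H, (∃ z : EuclideanSpace ℝ (Fin m), S x₀ z < h x₀) →
      ContinuousAt φ x₀ ∧ (∀ lam : ℝ, 0 < lam → ContinuousAt (φl lam) x₀) := by
  intro x₀ hx₀
  obtain ⟨zb, hzb⟩ := hx₀
  haveI : Nonempty ↥C := hCne.to_subtype
  obtain ⟨B, hB0, hBd⟩ := dual_bound C hCcpt
  have hh : Continuous h := hC1.continuous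
  set Sp : H × EuclideanSpace ℝ (Fin m) → ℝ := fun w => S w.1 w.2 with hSp
  have hSge : ∀ w : H × EuclideanSpace ℝ (Fin m),
      Sp w = ⨆ v : C, ((v : WeakDual ℝ Y) (Φ w.1 w.2) + h w.1) := fun w => hS w.1 w.2
  have hbdd : ∀ w : H × EuclideanSpace ℝ (Fin m),
      BddAbove (Set.range fun v : C => ((v : WeakDual ℝ Y) (Φ w.1 w.2) + h w.1)) := by
    intro w
    refine ⟨B * ‖Φ w.1 w.2‖ + h w.1, ?_⟩
    rintro _ ⟨v, rfl⟩
    have h1 := hBd v v.2 (Φ w.1 w.2)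
    have h2 : (v : WeakDual ℝ Y) (Φ w.1 w.2) ≤ B * ‖Φ w.1 w.2‖ :=
      le_trans (le_abs_self _) h1
    simp only []
    linarith
  have hSle : ∀ w : H × EuclideanSpace ℝ (Fin m), Sp w ≤ B * ‖Φ w.1 w.2‖ + h w.1 := by
    intro w
    rw [hSge]
    refine ciSup_le fun v => ?_
    have h1 := hBd v v.2 (Φ w.1 w.2)
    have h2 : (v : WeakDual ℝ Y) (Φ w.1 w.2) ≤ B * ‖Φ w.1 w.2‖ :=
      le_trans (le_abs_self _) h1
    linarith
  have hSconv : ConvexOn ℝ Set.univ Sp := by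
    refine ⟨convex_univ, fun p _ q _ a b ha hb hab => ?_⟩
    show Sp (a•p+b•q) ≤ a • Sp p + b • Sp q
    simp only [smul_eq_mul]
    rw [hSge]
    refine ciSup_le fun v => ?_
    have hc := (hscal v v.2).2 (Set.mem_univ p) (Set.mem_univ q) ha hb hab
    simp only [smul_eq_mul] at hc
    have hple : (v : WeakDual ℝ Y) (Φ p.1 p.2) + h p.1 ≤ Sp p := by
      rw [hSge p]; exact le_ciSup (hbdd p) v
    have hqle : (v : WeakDual ℝ Y) (Φ q.1 q.2) + h q.1 ≤ Sp q := by
      rw [hSge q]; exact le_ciSup (hbdd q) v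
    calc (v : WeakDual ℝ Y) (Φ (a•p+b•q).1 (a•p+b•q).2) + h (a•p+b•q).1
        ≤ a * ((v : WeakDual ℝ Y) (Φ p.1 p.2) + h p.1)
          + b * ((v : WeakDual ℝ Y) (Φ q.1 q.2) + h q.1) := hc
      _ ≤ a * Sp p + b * Sp q :=
          add_le_add (mul_le_mul_of_nonneg_left hple ha) (mul_le_mul_of_nonneg_left hqle hb)
  have hScont : Continuous Sp := by
    have htf := (hSconv.continuousOn_tfae isOpen_univ ⟨(x₀, zb), Set.mem_univ _⟩).out 3 1
    have hcontb : Continuous fun w : H × EuclideanSpace ℝ (Fin m) =>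
        B * ‖Φ w.1 w.2‖ + h w.1 :=
      ((continuous_const.mul hΦ.norm).add (hh.comp continuous_fst))
    have hev : ∀ᶠ w in 𝓝 ((x₀, zb) : H × EuclideanSpace ℝ (Fin m)),
        B * ‖Φ w.1 w.2‖ + h w.1 < B * ‖Φ x₀ zb‖ + h x₀ + 1 :=
      (hcontb.tendsto _).eventually (eventually_lt_nhds (lt_add_one _))
    have hbound : ∃ w₀ ∈ (Set.univ : Set (H × EuclideanSpace ℝ (Fin m))),
        Filter.IsBoundedUnder (· ≤ ·) (𝓝 w₀) Sp := by
      refine ⟨(x₀, zb), Set.mem_univ _, B * ‖Φ x₀ zb‖ + h x₀ + 1,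
        eventually_map.2 ?_⟩
      exact hev.mono fun w hw => le_of_lt (lt_of_le_of_lt (hSle w) hw)
    exact continuousOn_univ.1 (htf.1 hbound)
  -- affine minorant
  obtain ⟨cc, G, hG0, hlow⟩ : ∃ cc G : ℝ, 0 ≤ G ∧
      ∀ w : H × EuclideanSpace ℝ (Fin m), -cc - G * ‖w‖ ≤ Sp w := by
    set epi : Set ((H × EuclideanSpace ℝ (Fin m)) × ℝ) := {p | Sp p.1 < p.2} with hepi
    have hepiconv : Convex ℝ epi := by
      intro p hp q hq a b ha hb hab
      simp only [hepi, Set.mem_setOf_eq] at hp hq ⊢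
      have h1 := hSconv.2 (Set.mem_univ p.1) (Set.mem_univ q.1) ha hb hab
      simp only [smul_eq_mul] at h1
      have h2 : (a • p + b • q).1 = a • p.1 + b • q.1 := rfl
      have h3 : (a • p + b • q).2 = a * p.2 + b * q.2 := rfl
      rw [h2, h3]
      rcases eq_or_lt_of_le ha with haz | hapos
      · have hb1 : b = 1 := by linarith
        simp [← haz, hb1, hq]
      · calc Sp (a • p.1 + b • q.1) ≤ a * Sp p.1 + b * Sp q.1 := h1
          _ < a * p.2 + b * q.2 :=
            add_lt_add_of_lt_of_le (mul_lt_mul_of_pos_left hp hapos)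
              (mul_le_mul_of_nonneg_left (le_of_lt hq) hb)
    have hepiopen : IsOpen epi := isOpen_lt (hScont.comp continuous_fst) continuous_snd
    have hnot : (((x₀, zb) : H × EuclideanSpace ℝ (Fin m)), Sp (x₀, zb)) ∉ epi := by
      simp [hepi]
    obtain ⟨f, hf⟩ := geometric_hahn_banach_open_point hepiconv hepiopen hnot
    set g0 : (H × EuclideanSpace ℝ (Fin m)) →L[ℝ] ℝ :=
      f.comp (ContinuousLinearMap.inl ℝ _ ℝ) with hg0
    set aa : ℝ := f (0, 1) with haa
    have hsplit : ∀ (w : H × EuclideanSpace ℝ (Fin m)) (t : ℝ), f (w, t) = g0 w + t * aa := by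
      intro w t
      have h1 : ((w, t) : (H × EuclideanSpace ℝ (Fin m)) × ℝ)
          = (w, (0:ℝ)) + t • ((0 : H × EuclideanSpace ℝ (Fin m)), (1:ℝ)) := by
        simp [Prod.ext_iff]
      rw [h1, map_add, _root_.map_smul, smul_eq_mul]
      rfl
    have haneg : aa < 0 := by
      have h1 := hf ((x₀, zb), Sp (x₀, zb) + 1) (by simp [hepi])
      rw [hsplit, hsplit] at h1
      have h2 : (Sp (x₀, zb) + 1) * aa = Sp (x₀, zb) * aa + aa := by ring
      linarith
    have hmin : ∀ w : H × EuclideanSpace ℝ (Fin m),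
        g0 w + Sp w * aa ≤ g0 (x₀, zb) + Sp (x₀, zb) * aa := by
      intro w
      apply real_le_of_forall_pos_le_add
      intro ε hε
      have hmem : ((w, Sp w + ε / (-aa)) : (H × EuclideanSpace ℝ (Fin m)) × ℝ) ∈ epi := by
        simp only [hepi, Set.mem_setOf_eq]
        have : 0 < ε / (-aa) := div_pos hε (by linarith)
        linarith
      have h1 := hf _ hmem
      rw [hsplit, hsplit] at h1
      have hne' : -aa ≠ 0 := by linarith
      have h3 : ε / (-aa) * aa = -(ε / (-aa) * (-aa)) := by ring
      rw [div_mul_cancel₀ ε hne'] at h3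
      have h2 : (Sp w + ε / (-aa)) * aa = Sp w * aa - ε := by
        rw [add_mul, h3]; ring
      rw [h2] at h1
      linarith
    set β : ℝ := g0 (x₀, zb) + Sp (x₀, zb) * aa with hβ
    have hna : 0 < -aa := by linarith
    refine ⟨|β| / (-aa), ‖g0‖ / (-aa), by positivity, fun w => ?_⟩
    have h2 : |g0 w| ≤ ‖g0‖ * ‖w‖ := by
      rw [← Real.norm_eq_abs]; exact g0.le_opNorm w
    have h3 := hmin w
    have h4 : g0 w - β ≤ Sp w * (-aa) := by
      have h5 : Sp w * (-aa) = -(Sp w * aa) := by ring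
      linarith
    have h5 : -(‖g0‖ * ‖w‖) ≤ g0 w := by
      have := neg_abs_le (g0 w); linarith
    have h6 : -β ≥ -|β| := by linarith [le_abs_self β]
    have h1 : -(‖g0‖ * ‖w‖) - |β| ≤ Sp w * (-aa) := by linarith
    have hne : aa ≠ 0 := by linarith
    have h7 : (-(‖g0‖ * ‖w‖) - |β|) / (-aa) ≤ Sp w := (div_le_iff₀ hna).2 h1
    have h8 : -(|β| / (-aa)) - ‖g0‖ / (-aa) * ‖w‖ = (-(‖g0‖ * ‖w‖) - |β|) / (-aa) := by
      field_simp
      ring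
    rw [h8]
    exact h7
  -- φ part
  have hφcont : ContinuousAt φ x₀ := by
    have hk := key_aux P ξ hξ hlaw Sp hScont hSconv h hh x₀ zb hzb
    have heq : φ = fun x => (P {ω | Sp (x, ξ ω) ≤ h x}).toReal := by
      funext x; rw [hφ x]
    rw [heq]
    exact hk
  refine ⟨hφcont, fun lam hlam => ?_⟩
  -- Moreau envelope part
  set Mp : H × EuclideanSpace ℝ (Fin m) → ℝ := fun w => moreauEnv2 S lam w.1 w.2 with hMp
  have hdefM : ∀ w : H × EuclideanSpace ℝ (Fin m),
      Mp w = ⨅ u : H × EuclideanSpace ℝ (Fin m),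
        (S u.1 u.2 + (‖w.1 - u.1‖ ^ 2 + ‖w.2 - u.2‖ ^ 2) / (2 * lam)) := fun w => rfl
  have hbb : ∀ w : H × EuclideanSpace ℝ (Fin m),
      BddBelow (Set.range fun u : H × EuclideanSpace ℝ (Fin m) =>
        S u.1 u.2 + (‖w.1 - u.1‖ ^ 2 + ‖w.2 - u.2‖ ^ 2) / (2 * lam)) := by
    intro w
    refine ⟨-cc - (G * ‖w.1‖ + G ^ 2 * lam / 2) - (G * ‖w.2‖ + G ^ 2 * lam / 2), ?_⟩
    rintro _ ⟨u, rfl⟩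
    have hu : -cc - G * ‖u‖ ≤ S u.1 u.2 := hlow u
    have hn : ‖u‖ ≤ ‖u.1‖ + ‖u.2‖ := by
      rw [Prod.norm_def]
      exact max_le (le_add_of_nonneg_right (norm_nonneg _))
        (le_add_of_nonneg_left (norm_nonneg _))
    have hGn : G * ‖u‖ ≤ G * (‖u.1‖ + ‖u.2‖) := mul_le_mul_of_nonneg_left hn hG0
    have hq1 : (‖u.1‖ - ‖w.1‖) ^ 2 ≤ ‖w.1 - u.1‖ ^ 2 := by
      have ha1 : |‖u.1‖ - ‖w.1‖| ≤ ‖u.1 - w.1‖ := abs_norm_sub_norm_le u.1 w.1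
      rw [norm_sub_rev] at ha1
      calc (‖u.1‖ - ‖w.1‖) ^ 2 = |‖u.1‖ - ‖w.1‖| ^ 2 := (sq_abs _).symm
        _ ≤ ‖w.1 - u.1‖ ^ 2 := pow_le_pow_left₀ (abs_nonneg _) ha1 2
    have hq2 : (‖u.2‖ - ‖w.2‖) ^ 2 ≤ ‖w.2 - u.2‖ ^ 2 := by
      have ha2 : |‖u.2‖ - ‖w.2‖| ≤ ‖u.2 - w.2‖ := abs_norm_sub_norm_le u.2 w.2
      rw [norm_sub_rev] at ha2
      calc (‖u.2‖ - ‖w.2‖) ^ 2 = |‖u.2‖ - ‖w.2‖| ^ 2 := (sq_abs _).symm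
        _ ≤ ‖w.2 - u.2‖ ^ 2 := pow_le_pow_left₀ (abs_nonneg _) ha2 2
    have hl1 := quad_low (G := G) (r := ‖u.1‖) (aa := ‖w.1‖) hlam
    have hl2 := quad_low (G := G) (r := ‖u.2‖) (aa := ‖w.2‖) hlam
    have hdiv : ((‖u.1‖ - ‖w.1‖) ^ 2 + (‖u.2‖ - ‖w.2‖) ^ 2) / (2 * lam)
        ≤ (‖w.1 - u.1‖ ^ 2 + ‖w.2 - u.2‖ ^ 2) / (2 * lam) := by
      gcongr
    have hsum : (‖u.1‖ - ‖w.1‖) ^ 2 / (2 * lam) + (‖u.2‖ - ‖w.2‖) ^ 2 / (2 * lam)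
        = ((‖u.1‖ - ‖w.1‖) ^ 2 + (‖u.2‖ - ‖w.2‖) ^ 2) / (2 * lam) := by rw [add_div]
    simp only []
    linarith
  have hMle : ∀ w : H × EuclideanSpace ℝ (Fin m), Mp w ≤ Sp w := by
    intro w
    have h1 := ciInf_le (hbb w) w
    rw [hdefM]
    simpa [hSp] using h1
  have hMconv : ConvexOn ℝ Set.univ Mp := by
    refine ⟨convex_univ, fun p _ q _ a b ha hb hab => ?_⟩
    show Mp (a•p+b•q) ≤ a • Mp p + b • Mp q
    simp only [smul_eq_mul]
    apply real_le_of_forall_pos_le_add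
    intro ε hε
    have hp1 : (⨅ u : H × EuclideanSpace ℝ (Fin m),
        (S u.1 u.2 + (‖p.1 - u.1‖ ^ 2 + ‖p.2 - u.2‖ ^ 2) / (2 * lam))) < Mp p + ε/2 := by
      rw [← hdefM]; linarith
    have hq1 : (⨅ u : H × EuclideanSpace ℝ (Fin m),
        (S u.1 u.2 + (‖q.1 - u.1‖ ^ 2 + ‖q.2 - u.2‖ ^ 2) / (2 * lam))) < Mp q + ε/2 := by
      rw [← hdefM]; linarith
    obtain ⟨u₁, hu₁⟩ := exists_lt_of_ciInf_lt hp1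
    obtain ⟨u₂, hu₂⟩ := exists_lt_of_ciInf_lt hq1
    have hle1 : Mp (a•p+b•q) ≤ S (a•u₁+b•u₂).1 (a•u₁+b•u₂).2
        + (‖(a•p+b•q).1 - (a•u₁+b•u₂).1‖ ^ 2 + ‖(a•p+b•q).2 - (a•u₁+b•u₂).2‖ ^ 2)
          / (2 * lam) := by
      rw [hdefM]; exact ciInf_le (hbb _) _
    have hcS := hSconv.2 (Set.mem_univ u₁) (Set.mem_univ u₂) ha hb hab
    simp only [smul_eq_mul] at hcS
    have hv1 : (a•p+b•q).1 - (a•u₁+b•u₂).1 = a•(p.1-u₁.1) + b•(q.1-u₂.1) := by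
      show a•p.1+b•q.1 - (a•u₁.1+b•u₂.1) = a•(p.1-u₁.1) + b•(q.1-u₂.1)
      module
    have hv2 : (a•p+b•q).2 - (a•u₁+b•u₂).2 = a•(p.2-u₁.2) + b•(q.2-u₂.2) := by
      show a•p.2+b•q.2 - (a•u₁.2+b•u₂.2) = a•(p.2-u₁.2) + b•(q.2-u₂.2)
      module
    have hn1 : ‖(a•p+b•q).1 - (a•u₁+b•u₂).1‖ ≤ a*‖p.1-u₁.1‖ + b*‖q.1-u₂.1‖ := by
      rw [hv1]
      refine (norm_add_le _ _).trans ?_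
      rw [norm_smul, norm_smul]
      simp [Real.norm_eq_abs, abs_of_nonneg ha, abs_of_nonneg hb]
    have hn2 : ‖(a•p+b•q).2 - (a•u₁+b•u₂).2‖ ≤ a*‖p.2-u₁.2‖ + b*‖q.2-u₂.2‖ := by
      rw [hv2]
      refine (norm_add_le _ _).trans ?_
      rw [norm_smul, norm_smul]
      simp [Real.norm_eq_abs, abs_of_nonneg ha, abs_of_nonneg hb]
    have hs1 : ‖(a•p+b•q).1 - (a•u₁+b•u₂).1‖ ^ 2 ≤ a*‖p.1-u₁.1‖^2 + b*‖q.1-u₂.1‖^2 :=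
      calc ‖(a•p+b•q).1 - (a•u₁+b•u₂).1‖ ^ 2 ≤ (a*‖p.1-u₁.1‖ + b*‖q.1-u₂.1‖)^2 :=
            pow_le_pow_left₀ (norm_nonneg _) hn1 2
        _ ≤ _ := sq_combo ha hb hab (norm_nonneg _) (norm_nonneg _)
    have hs2 : ‖(a•p+b•q).2 - (a•u₁+b•u₂).2‖ ^ 2 ≤ a*‖p.2-u₁.2‖^2 + b*‖q.2-u₂.2‖^2 :=
      calc ‖(a•p+b•q).2 - (a•u₁+b•u₂).2‖ ^ 2 ≤ (a*‖p.2-u₁.2‖ + b*‖q.2-u₂.2‖)^2 :=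
            pow_le_pow_left₀ (norm_nonneg _) hn2 2
        _ ≤ _ := sq_combo ha hb hab (norm_nonneg _) (norm_nonneg _)
    have hdiv : (‖(a•p+b•q).1 - (a•u₁+b•u₂).1‖ ^ 2 + ‖(a•p+b•q).2 - (a•u₁+b•u₂).2‖ ^ 2)
          / (2 * lam)
        ≤ a * ((‖p.1-u₁.1‖^2 + ‖p.2-u₁.2‖^2)/(2*lam))
          + b * ((‖q.1-u₂.1‖^2 + ‖q.2-u₂.2‖^2)/(2*lam)) := by
      have hnum : ‖(a•p+b•q).1 - (a•u₁+b•u₂).1‖ ^ 2 + ‖(a•p+b•q).2 - (a•u₁+b•u₂).2‖ ^ 2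
          ≤ a * (‖p.1-u₁.1‖^2 + ‖p.2-u₁.2‖^2) + b * (‖q.1-u₂.1‖^2 + ‖q.2-u₂.2‖^2) := by
        linarith
      calc (‖(a•p+b•q).1 - (a•u₁+b•u₂).1‖ ^ 2 + ‖(a•p+b•q).2 - (a•u₁+b•u₂).2‖ ^ 2) / (2*lam)
          ≤ (a * (‖p.1-u₁.1‖^2 + ‖p.2-u₁.2‖^2) + b * (‖q.1-u₂.1‖^2 + ‖q.2-u₂.2‖^2))/(2*lam) := by
            gcongr
        _ = a * ((‖p.1-u₁.1‖^2 + ‖p.2-u₁.2‖^2)/(2*lam))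
            + b * ((‖q.1-u₂.1‖^2 + ‖q.2-u₂.2‖^2)/(2*lam)) := by ring
    -- assemble
    have hm1 : a * (S u₁.1 u₁.2 + (‖p.1-u₁.1‖^2 + ‖p.2-u₁.2‖^2)/(2*lam)) ≤ a * (Mp p + ε/2) :=
      mul_le_mul_of_nonneg_left (le_of_lt hu₁) ha
    have hm2 : b * (S u₂.1 u₂.2 + (‖q.1-u₂.1‖^2 + ‖q.2-u₂.2‖^2)/(2*lam)) ≤ b * (Mp q + ε/2) :=
      mul_le_mul_of_nonneg_left (le_of_lt hu₂) hb
    have hSmid : S (a•u₁+b•u₂).1 (a•u₁+b•u₂).2 ≤ a * S u₁.1 u₁.2 + b * S u₂.1 u₂.2 := hcS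
    nlinarith [hle1, hdiv, hm1, hm2, hSmid]
  have hMcont : Continuous Mp := by
    have htf := (hMconv.continuousOn_tfae isOpen_univ ⟨(x₀, zb), Set.mem_univ _⟩).out 3 1
    have hev : ∀ᶠ w in 𝓝 ((x₀, zb) : H × EuclideanSpace ℝ (Fin m)), Sp w < Sp (x₀, zb) + 1 :=
      (hScont.tendsto _).eventually (eventually_lt_nhds (lt_add_one _))
    have hbound : ∃ w₀ ∈ (Set.univ : Set (H × EuclideanSpace ℝ (Fin m))),
        Filter.IsBoundedUnder (· ≤ ·) (𝓝 w₀) Mp := by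
      refine ⟨(x₀, zb), Set.mem_univ _, Sp (x₀, zb) + 1, eventually_map.2 ?_⟩
      exact hev.mono fun w hw => le_of_lt (lt_of_le_of_lt (hMle w) hw)
    exact continuousOn_univ.1 (htf.1 hbound)
  have hMzb : Mp (x₀, zb) < h x₀ := lt_of_le_of_lt (hMle (x₀, zb)) hzb
  have hk := key_aux P ξ hξ hlaw Mp hMcont hMconv h hh x₀ zb hMzb
  have heq : φl lam = fun x => (P {ω | Mp (x, ξ ω) ≤ h x}).toReal := by
    funext x; rw [hφl lam x]
  rw [heq]
  exact hk
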